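/- Let A, B be SPD, λ₁ the smallest eigenvalue of A with eigenvector u*, x* = B^{1/2}u*/‖B^{1/2}u*‖, and let φ ∈ (0,π/2] be defined by sin φ = ‖u*‖²/(‖u*‖_B‖u*‖_{B⁻¹}). For any unit vector x with θ := arccos(xᵀx*) < φ, the function f(x) = −(xᵀB⁻¹x)/(xᵀB^{-1/2}AB^{-1/2}x) satisfies ⟨∇f(x), −log_x(x*)⟩ ≥ 2a(x)(f(x) − f(x*)) with a(x) = λ₁‖u*‖²_{B⁻¹}(cos θ − cos φ)/(‖A^{1/2}B^{-1/2}x‖²‖u*‖²), where log_x(x*) = (θ/sin θ)(I − xxᵀ)x* and f(x*) = −1/λ₁. -/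

import Mathlib

open Matrix

lemma symm_dot {n : ℕ} (M : Matrix (Fin n) (Fin n) ℝ) (hM : M.IsHermitian)
    (v w : Fin n → ℝ) : v ⬝ᵥ M *ᵥ w = M *ᵥ v ⬝ᵥ w := by
  rw [Matrix.dotProduct_mulVec, ← Matrix.mulVec_transpose]
  congr 1
  rw [← Matrix.conjTranspose_eq_transpose_of_trivial, hM]

lemma cs_sq {n : ℕ} (v w : Fin n → ℝ) : (v ⬝ᵥ w)^2 ≤ (v ⬝ᵥ v) * (w ⬝ᵥ w) := by
  simpa [dotProduct, sq] using Finset.sum_mul_sq_le_sq_mul_sq Finset.univ v w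

lemma pd_pos {n : ℕ} {M : Matrix (Fin n) (Fin n) ℝ} (hM : M.PosDef)
    {v : Fin n → ℝ} (hv : v ≠ 0) : 0 < v ⬝ᵥ M *ᵥ v := by
  simpa using hM.dotProduct_mulVec_pos hv

lemma key_scalar {th st c cphi s t nC sub : ℝ}
    (h1 : 0 < st) (h2 : st ≤ th) (h3 : 0 ≤ sub) (h4 : nC * sub ≤ t)
    (h5 : c - cphi ≤ s * sub) (h6 : 0 < nC) (h7 : 0 < s) :
    nC * (c - cphi) * st ≤ th * t * s := by
  have ht0 : 0 ≤ t := le_trans (by positivity) h4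
  have hA1 : nC * (c - cphi) ≤ t * s := by nlinarith
  calc nC * (c - cphi) * st ≤ (t * s) * st := mul_le_mul_of_nonneg_right hA1 h1.le
    _ ≤ (t * s) * th := mul_le_mul_of_nonneg_left h2 (by positivity)
    _ = th * t * s := by ring

set_option maxHeartbeats 1000000 in
theorem stmt_13 {n : ℕ} (A B S R : Matrix (Fin n) (Fin n) ℝ)
    (hA : A.PosDef) (hB : B.PosDef)
    (hS : S.PosDef) (hSB : S * S = B)
    (hR : R.PosDef) (hRB : R * R = B⁻¹)
    (lam₁ : ℝ) (hlam₁ : 0 < lam₁)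
    (hmin : ∀ y : Fin n → ℝ, lam₁ * (y ⬝ᵥ y) ≤ y ⬝ᵥ A.mulVec y)
    (u : Fin n → ℝ) (hu : u ≠ 0) (hAu : A.mulVec u = lam₁ • u)
    (xstar : Fin n → ℝ)
    (hxstar : xstar = (Real.sqrt (u ⬝ᵥ B.mulVec u))⁻¹ • S.mulVec u)
    (φ : ℝ)
    (hφ : φ = Real.arcsin
      ((u ⬝ᵥ u) / (Real.sqrt (u ⬝ᵥ B.mulVec u) * Real.sqrt (u ⬝ᵥ B⁻¹.mulVec u))))
    (x : Fin n → ℝ) (hx : x ⬝ᵥ x = 1)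
    (θ : ℝ) (hθ : θ = Real.arccos (x ⬝ᵥ xstar)) (hθφ : θ < φ)
    (logx : Fin n → ℝ)
    (hlog : logx = if θ = 0 then 0 else (θ / Real.sin θ) • (xstar - (x ⬝ᵥ xstar) • x))
    (f fstar : ℝ)
    (hf : f = -(x ⬝ᵥ B⁻¹.mulVec x) / (x ⬝ᵥ (R * A * R).mulVec x))
    (hfstar : fstar = -1 / lam₁)
    (g : Fin n → ℝ)
    (hg : g = (-2 / (x ⬝ᵥ (R * A * R).mulVec x)) •
      (B⁻¹.mulVec x + f • (R * A * R).mulVec x))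
    (a : ℝ)
    (ha : a = lam₁ * (u ⬝ᵥ B⁻¹.mulVec u) * (Real.cos θ - Real.cos φ) /
      ((x ⬝ᵥ (R * A * R).mulVec x) * (u ⬝ᵥ u))) :
    g ⬝ᵥ (-logx) ≥ 2 * a * (f - fstar) := by
  -- R S = 1
  have h1 : R = S⁻¹ := by
    open scoped MatrixOrder in
    refine (CFC.sq_eq_sq_iff R S⁻¹ hR.posSemidef.nonneg (hS.inv).posSemidef.nonneg).mp ?_
    rw [pow_two, pow_two, hRB, ← hSB, Matrix.mul_inv_rev]
  have hRS : R * S = 1 := by rw [h1, Matrix.nonsing_inv_mul _ hS.det_pos.ne'.isUnit]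
  have hSR : S * R = 1 := mul_eq_one_comm.mp hRS
  set w : Fin n → ℝ := R *ᵥ x with hw
  set v : Fin n → ℝ := R *ᵥ u with hv
  -- dot product rewrites
  have hq : x ⬝ᵥ (R * A * R) *ᵥ x = w ⬝ᵥ A *ᵥ w := by
    rw [← Matrix.mulVec_mulVec, ← Matrix.mulVec_mulVec, symm_dot R hR.1]
  have hBinv : B⁻¹ = R * R := hRB.symm
  have hp : x ⬝ᵥ B⁻¹ *ᵥ x = w ⬝ᵥ w := by
    rw [hBinv, ← Matrix.mulVec_mulVec, symm_dot R hR.1]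
  have huB : u ⬝ᵥ B *ᵥ u = (S *ᵥ u) ⬝ᵥ (S *ᵥ u) := by
    rw [← hSB, ← Matrix.mulVec_mulVec, symm_dot S hS.1]
  have huBi : u ⬝ᵥ B⁻¹ *ᵥ u = v ⬝ᵥ v := by
    rw [hBinv, ← Matrix.mulVec_mulVec, symm_dot R hR.1]
  have hSuv : (S *ᵥ u) ⬝ᵥ v = u ⬝ᵥ u := by
    rw [← symm_dot S hS.1, hv, Matrix.mulVec_mulVec, hSR, Matrix.one_mulVec]
  -- positivity
  have hx0 : x ≠ 0 := by intro h; rw [h] at hx; simp at hx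
  have hwx : w ≠ 0 := by
    intro h
    have h2 := pd_pos hB.inv hx0
    rw [hp, h] at h2; simp at h2
  have hqpos : 0 < x ⬝ᵥ (R * A * R) *ᵥ x := hq ▸ pd_pos hA hwx
  have hppos : 0 < x ⬝ᵥ B⁻¹ *ᵥ x := pd_pos hB.inv hx0
  have hBu : 0 < u ⬝ᵥ B *ᵥ u := pd_pos hB hu
  have hCu : 0 < u ⬝ᵥ B⁻¹ *ᵥ u := pd_pos hB.inv hu
  have huu : 0 < u ⬝ᵥ u := by
    have h0 : 0 ≤ u ⬝ᵥ u := Finset.sum_nonneg fun i _ => mul_self_nonneg _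
    rcases h0.lt_or_eq with h | h
    · exact h
    · exact absurd (dotProduct_self_eq_zero.mp h.symm) hu
  -- scalar abbreviations
  set nB : ℝ := Real.sqrt (u ⬝ᵥ B *ᵥ u) with hnBdef
  set nC : ℝ := Real.sqrt (u ⬝ᵥ B⁻¹ *ᵥ u) with hnCdef
  have hnB : 0 < nB := Real.sqrt_pos.mpr hBu
  have hnC : 0 < nC := Real.sqrt_pos.mpr hCu
  have hnB2 : nB ^ 2 = u ⬝ᵥ B *ᵥ u := Real.sq_sqrt hBu.le
  have hnC2 : nC ^ 2 = u ⬝ᵥ B⁻¹ *ᵥ u := Real.sq_sqrt hCu.le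
  set s : ℝ := u ⬝ᵥ u / (nB * nC) with hsdef
  have hspos : 0 < s := div_pos huu (by positivity)
  have hs1 : s ≤ 1 := by
    rw [div_le_one (by positivity)]
    nlinarith [cs_sq (S *ᵥ u) v, huB, huBi, hSuv, hnB2, hnC2, huu, hnB, hnC,
      mul_pos hnB hnC]
  -- phi facts
  have hsinφ : Real.sin φ = s := by rw [hφ]; exact Real.sin_arcsin (by linarith) hs1
  have hφpos : 0 < φ := by rw [hφ]; exact Real.arcsin_pos.mpr hspos
  have hφle : φ ≤ Real.pi / 2 := by rw [hφ]; exact Real.arcsin_le_pi_div_two _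
  have hcosφ : Real.cos φ = Real.sqrt (1 - s ^ 2) := by rw [hφ, Real.cos_arcsin]
  have hcosφ0 : 0 ≤ Real.cos φ := by rw [hcosφ]; positivity
  have hs2le : s ^ 2 ≤ 1 := pow_le_one₀ hspos.le hs1
  have hcosφ2 : Real.cos φ ^ 2 = 1 - s ^ 2 := by
    rw [hcosφ, Real.sq_sqrt (by linarith)]
  -- xstar facts
  have hxs1 : xstar ⬝ᵥ xstar = 1 := by
    rw [hxstar, dotProduct_smul, smul_dotProduct, ← huB, smul_eq_mul,
      smul_eq_mul, ← mul_assoc, ← mul_inv, Real.mul_self_sqrt hBu.le]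
    exact inv_mul_cancel₀ hBu.ne'
  set c : ℝ := x ⬝ᵥ xstar with hcdef
  have hc2 : c ^ 2 ≤ 1 := by
    have h2 := cs_sq x xstar
    rw [hx, hxs1] at h2; simpa using h2
  obtain ⟨hcge, hcle⟩ : -1 ≤ c ∧ c ≤ 1 :=
    abs_le_of_sq_le_sq' (by simpa using hc2) zero_le_one
  have hcosθ : Real.cos θ = c := by rw [hθ]; exact Real.cos_arccos hcge hcle
  have hsinθ : Real.sin θ = Real.sqrt (1 - c ^ 2) := by rw [hθ]; exact Real.sin_arccos _
  have hθ0 : 0 ≤ θ := by rw [hθ]; exact Real.arccos_nonneg _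
  rcases eq_or_ne θ 0 with h0 | h0
  · -- zero-angle case : x = xstar and f = fstar
    have hc1 : c = 1 := by rw [← hcosθ, h0, Real.cos_zero]
    have hxx : x = xstar := by
      have hd : (x - xstar) ⬝ᵥ (x - xstar) = 0 := by
        rw [sub_dotProduct, dotProduct_sub, dotProduct_sub, hx, hxs1,
          dotProduct_comm xstar x, ← hcdef, hc1]
        ring
      exact sub_eq_zero.mp (dotProduct_self_eq_zero.mp hd)
    have hwst : w = nB⁻¹ • u := by
      rw [hw, hxx, hxstar, Matrix.mulVec_smul, Matrix.mulVec_mulVec, hRS, Matrix.one_mulVec]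
    have hfeq : f = fstar := by
      rw [hf, hfstar, hq, hp, hwst, Matrix.mulVec_smul, hAu, dotProduct_smul,
        smul_dotProduct, dotProduct_smul, smul_dotProduct,
        dotProduct_smul]
      simp only [smul_eq_mul]
      rw [div_eq_div_iff (by positivity) (by positivity)]
      field_simp
    rw [hlog, if_pos h0, hfeq]
    simp
  · -- main case
    have hθpos : 0 < θ := lt_of_le_of_ne hθ0 (Ne.symm h0)
    have hsinθpos : 0 < Real.sin θ :=
      Real.sin_pos_of_pos_of_lt_pi hθpos (by linarith [Real.pi_pos, hθφ, hφle])
    have hθsin : Real.sin θ ≤ θ := (Real.sin_lt hθpos).le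
    -- v ⬝ᵥ xstar
    have hvxs : v ⬝ᵥ xstar = (u ⬝ᵥ u) / nB := by
      rw [hxstar, dotProduct_smul, dotProduct_comm v, hSuv, smul_eq_mul,
        inv_mul_eq_div]
    set t : ℝ := v ⬝ᵥ x with htdef
    set z : Fin n → ℝ := x - c • xstar with hzdef
    have hzz : z ⬝ᵥ z = 1 - c ^ 2 := by
      simp only [hzdef, sub_dotProduct, dotProduct_sub,
        smul_dotProduct, dotProduct_smul, smul_eq_mul,
        dotProduct_comm xstar x, ← hcdef, hx, hxs1]
      ring
    set r : Fin n → ℝ := v - ((u ⬝ᵥ u) / nB) • xstar with hrdef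
    have hmeq : (u ⬝ᵥ u) / nB = s * nC := by
      rw [hsdef]; field_simp
    have hvv : v ⬝ᵥ v = nC ^ 2 := (hnC2.trans huBi).symm
    have hrr : r ⬝ᵥ r = nC ^ 2 * (1 - s ^ 2) := by
      simp only [hrdef, sub_dotProduct, dotProduct_sub,
        smul_dotProduct, dotProduct_smul, smul_eq_mul,
        dotProduct_comm xstar v, hvxs, hxs1, hvv, hmeq]
      ring
    have hrzval : r ⬝ᵥ z = t - (s * nC) * c := by
      simp only [hrdef, hzdef, sub_dotProduct, dotProduct_sub,
        smul_dotProduct, dotProduct_smul, smul_eq_mul,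
        dotProduct_comm xstar x, ← hcdef, ← htdef, hvxs, hxs1, hmeq]
      ring
    have hrz : -(nC * Real.cos φ * Real.sin θ) ≤ r ⬝ᵥ z := by
      have h2 := cs_sq r z
      rw [hrr, hzz] at h2
      have e1 : (r ⬝ᵥ z) ^ 2 ≤ (nC * Real.cos φ * Real.sin θ) ^ 2 := by
        have e0 : (nC * Real.cos φ * Real.sin θ) ^ 2 = nC ^ 2 * (1 - s ^ 2) * (1 - c ^ 2) := by
          rw [mul_pow, mul_pow, hcosφ2, hsinθ,
            Real.sq_sqrt (show (0:ℝ) ≤ 1 - c ^ 2 by linarith)]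
        rw [e0]
        exact h2
      exact (abs_le_of_sq_le_sq' e1
        (mul_nonneg (mul_nonneg hnC.le hcosφ0) hsinθpos.le)).1
    have hsinsub : Real.sin (φ - θ) = s * c - Real.cos φ * Real.sin θ := by
      rw [Real.sin_sub, hsinφ, hcosθ]
    have hsub0 : 0 ≤ Real.sin (φ - θ) :=
      Real.sin_nonneg_of_nonneg_of_le_pi (by linarith) (by linarith [Real.pi_pos])
    have ht : nC * Real.sin (φ - θ) ≤ t := by
      rw [hsinsub]
      have e2 : nC * (s * c - Real.cos φ * Real.sin θ)
          = s * nC * c - nC * Real.cos φ * Real.sin θ := by ring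
      rw [e2]
      linarith [hrz, hrzval]
    -- trig inequality
    have htrig : c - Real.cos φ ≤ s * Real.sin (φ - θ) := by
      have e3 : Real.cos θ = Real.cos φ * Real.cos (φ - θ) + Real.sin φ * Real.sin (φ - θ) := by
        have e4 : θ = φ - (φ - θ) := by ring
        calc Real.cos θ = Real.cos (φ - (φ - θ)) := by rw [← e4]
          _ = _ := Real.cos_sub _ _
      have e5 : Real.cos φ * Real.cos (φ - θ) ≤ Real.cos φ :=
        mul_le_of_le_one_right hcosφ0 (Real.cos_le_one _)
      rw [← hsinφ]
      linarith [e3, e5, hcosθ]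
    -- g dot products
    have hRAR : (R * A * R).IsHermitian := by
      have h6 := Matrix.isHermitian_mul_mul_conjTranspose R hA.1
      rwa [hR.1] at h6
    have hq0 : x ⬝ᵥ (R * A * R) *ᵥ x ≠ 0 := hqpos.ne'
    have hgx : g ⬝ᵥ x = 0 := by
      rw [hg, smul_dotProduct, add_dotProduct, smul_dotProduct,
        ← symm_dot B⁻¹ hB.inv.1 x x, ← symm_dot (R * A * R) hRAR x x]
      simp only [smul_eq_mul]
      rw [hf]
      field_simp
      ring
    have hBix : B⁻¹ *ᵥ xstar = nB⁻¹ • v := by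
      rw [hxstar, Matrix.mulVec_smul, hBinv, Matrix.mulVec_mulVec, mul_assoc, hRS,
        mul_one, ← hv]
    have hRARx : (R * A * R) *ᵥ xstar = (lam₁ * nB⁻¹) • v := by
      rw [hxstar, Matrix.mulVec_smul, Matrix.mulVec_mulVec, mul_assoc, hRS, mul_one,
        ← Matrix.mulVec_mulVec, hAu, Matrix.mulVec_smul, ← hv, smul_smul, mul_comm nB⁻¹ lam₁]
    have hgxs : g ⬝ᵥ xstar = (-2 / (x ⬝ᵥ (R * A * R) *ᵥ x)) * (nB⁻¹ * t * (1 + f * lam₁)) := by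
      rw [hg, smul_dotProduct, add_dotProduct, smul_dotProduct,
        ← symm_dot B⁻¹ hB.inv.1 x xstar, ← symm_dot (R * A * R) hRAR x xstar, hBix, hRARx,
        dotProduct_smul, dotProduct_smul, dotProduct_comm x v, ← htdef]
      simp only [smul_eq_mul]
      ring
    have hq' : 0 < w ⬝ᵥ A *ᵥ w := hq ▸ hqpos
    have hD : 0 ≤ f - fstar := by
      rw [hf, hfstar, hq, hp, sub_nonneg, neg_div, neg_div, neg_le_neg_iff,
        div_le_div_iff₀ hq' hlam₁]
      linarith [hmin w]
    have h1fl : 1 + f * lam₁ = lam₁ * (f - fstar) := by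
      rw [hfstar]
      field_simp
      ring
    have huueq : u ⬝ᵥ u = s * (nB * nC) := by
      rw [hsdef]
      field_simp
    rw [hlog, if_neg h0, dotProduct_neg, dotProduct_smul, dotProduct_sub,
      dotProduct_smul, hgx, hgxs, h1fl, ha, hcosθ, ← hnC2, huueq]
    simp only [smul_eq_mul, mul_zero, sub_zero]
    rw [ge_iff_le]
    have key : nC ^ 2 * (c - Real.cos φ) / (s * (nB * nC)) ≤ θ * t / (Real.sin θ * nB) := by
      rw [div_le_div_iff₀ (by positivity) (by positivity)]
      calc nC ^ 2 * (c - Real.cos φ) * (Real.sin θ * nB)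
          = (nC * (c - Real.cos φ) * Real.sin θ) * (nB * nC) := by ring
        _ ≤ (θ * t * s) * (nB * nC) :=
            mul_le_mul_of_nonneg_right
              (key_scalar hsinθpos hθsin hsub0 ht htrig hnC hspos) (by positivity)
        _ = θ * t * (s * (nB * nC)) := by ring
    have fnn : 0 ≤ 2 * lam₁ * (f - fstar) / (x ⬝ᵥ (R * A * R) *ᵥ x) :=
      div_nonneg (mul_nonneg (by positivity) hD) hqpos.le
    calc 2 * (lam₁ * nC ^ 2 * (c - Real.cos φ) / (x ⬝ᵥ (R * A * R) *ᵥ x * (s * (nB * nC))))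
          * (f - fstar)
        = (2 * lam₁ * (f - fstar) / (x ⬝ᵥ (R * A * R) *ᵥ x))
            * (nC ^ 2 * (c - Real.cos φ) / (s * (nB * nC))) := by
          ring
      _ ≤ (2 * lam₁ * (f - fstar) / (x ⬝ᵥ (R * A * R) *ᵥ x)) * (θ * t / (Real.sin θ * nB)) :=
          mul_le_mul_of_nonneg_left key fnn
      _ = -(θ / Real.sin θ * (-2 / x ⬝ᵥ (R * A * R) *ᵥ x * (nB⁻¹ * t * (lam₁ * (f - fstar))))) := by
          ring
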